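/- Let P be a finite partially ordered set, let L ⊆ P be an antichain, and let 𝒞 be a finite multiset of chains of P such that every chain C ∈ 𝒞 contains exactly one element of L. For x ∈ P write c(x) for the number of chains in 𝒞 (counted with multiplicity) that contain x. Suppose there is a positive integer γ such that c(x) = γ for every x ∈ L and c(x) > γ for every x ∈ P \ L. Then every antichain A of P with |A| = |L| satisfies A = L; that is, L is the unique maximum antichain. -/
import Mathlib

private lemma double_count {α : Type*} [DecidableEq α]
    (𝒞 : Multiset (Finset α)) (A : Finset α) :
    ∑ x ∈ A, Multiset.card (𝒞.filter (fun C => x ∈ C)) =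
      (𝒞.map (fun C => (C ∩ A).card)).sum := by
  induction 𝒞 using Multiset.induction with
  | empty => simp
  | cons C s ih =>
    simp only [Multiset.filter_cons, Multiset.map_cons, Multiset.sum_cons]
    have hsplit : ∀ x : α,
        Multiset.card ((if x ∈ C then ({C} : Multiset (Finset α)) else 0)
          + Multiset.filter (fun C => x ∈ C) s)
        = (if x ∈ C then 1 else 0) + Multiset.card (Multiset.filter (fun C => x ∈ C) s) := by
      intro x; by_cases hx : x ∈ C <;> simp [hx, Nat.add_comm]
    rw [Finset.sum_congr rfl (fun x _ => hsplit x), Finset.sum_add_distrib, ih]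
    congr 1
    rw [Finset.sum_ite_mem A C (fun _ => 1), Finset.inter_comm]
    simp
  
/-- If `L` is an antichain in a finite poset and `𝒞` is a finite multiset of chains,
each containing exactly one element of `L`, such that every element of `L` lies in
exactly `γ` chains (with multiplicity) and every element outside `L` lies in strictly
more than `γ` chains, then every antichain of size `|L|` equals `L`. -/
theorem stmt_1 {α : Type*} [Fintype α] [PartialOrder α] [DecidableEq α]
    (L : Finset α) (hL : IsAntichain (· ≤ ·) (L : Set α))
    (𝒞 : Multiset (Finset α))
    (hchain : ∀ C ∈ 𝒞, IsChain (· ≤ ·) (C : Set α))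
    (hone : ∀ C ∈ 𝒞, (C ∩ L).card = 1)
    (c : α → ℕ)
    (hc : ∀ x : α, c x = Multiset.card (𝒞.filter (fun C => x ∈ C)))
    (γ : ℕ) (hγ : 0 < γ)
    (hcL : ∀ x ∈ L, c x = γ)
    (hcout : ∀ x : α, x ∉ L → γ < c x)
    (A : Finset α) (hA : IsAntichain (· ≤ ·) (A : Set α))
    (hcard : A.card = L.card) :
    A = L := by
  -- total number of chains equals γ * |L|
  have hcge : ∀ x : α, γ ≤ c x := by
    intro x
    by_cases hx : x ∈ L
    · exact le_of_eq (hcL x hx).symm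
    · exact le_of_lt (hcout x hx)
  have hL_sum : ∑ x ∈ L, c x = γ * L.card := by
    rw [Finset.sum_congr rfl hcL]
    simp [mul_comm]
  have hdcL : ∑ x ∈ L, c x = Multiset.card 𝒞 := by
    simp only [hc]
    rw [double_count]
    have : (𝒞.map (fun C => (C ∩ L).card)) = 𝒞.map (fun _ => 1) := by
      apply Multiset.map_congr rfl
      intro C hC
      exact hone C hC
    rw [this]
    simp [mul_comm]
  -- each chain meets A in at most one element
  have hAle : ∀ C ∈ 𝒞, (C ∩ A).card ≤ 1 := by
    intro C hC
    apply Finset.card_le_one.2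
    intro a ha b hb
    simp only [Finset.mem_inter] at ha hb
    by_contra hne
    rcases (hchain C hC) ha.1 hb.1 hne with h | h
    · exact hA ha.2 hb.2 hne h
    · exact hA hb.2 ha.2 (Ne.symm hne) h
  have hA_sum : ∑ x ∈ A, c x ≤ Multiset.card 𝒞 := by
    simp only [hc]
    rw [double_count]
    calc (𝒞.map (fun C => (C ∩ A).card)).sum
        ≤ (𝒞.map (fun _ => 1)).sum := by
          apply Multiset.sum_le_sum_of_rel_le
          rw [Multiset.rel_map]
          apply Multiset.rel_refl_of_refl_on
          intro C hC
          exact hAle C hC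
      _ = Multiset.card 𝒞 := by simp
  -- every x ∈ A must lie in L
  have hsub : A ⊆ L := by
    intro x hx
    by_contra hxL
    have h1 : γ * A.card < ∑ y ∈ A, c y := by
      calc γ * A.card = ∑ _y ∈ A, γ := by simp [mul_comm]
        _ < ∑ y ∈ A, c y := by
            apply Finset.sum_lt_sum
            · intro i _; exact hcge i
            · exact ⟨x, hx, hcout x hxL⟩
    have h2 : ∑ y ∈ A, c y ≤ γ * A.card := by
      rw [hcard, ← hL_sum, hdcL]; exact hA_sum
    omega
  exact Finset.eq_of_subset_of_card_le hsub (le_of_eq hcard.symm)
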